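/- For every ε > 0 and every real x, the three-layer hierarchy Gaussian–Exponential–Gamma marginalizes to the generalized double Pareto density: ∫₀^∞ ∫₀^∞ (2πγ)^(−1/2) · exp(−x²/(2γ)) · (λ²/2) · exp(−λ²γ/2) · (ε^ε/Γ(ε)) · λ^(ε−1) · exp(−ελ) dγ dλ = (1/2) · (1 + |x|/ε)^(−(ε+1)). -/

import Mathlib

open MeasureTheory Real

lemma glasser (c d : ℝ) (hc : 0 < c) (hd : 0 < d) :
    ∫ t in Set.Ioi (0:ℝ), Real.exp (-(c*t - d/t)^2) = Real.sqrt π / (2*c) := by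
  set k := 4*c*d with hk
  have hk0 : 0 < k := by positivity
  set S : ℝ → ℝ := fun u => Real.sqrt (u^2 + k) with hS
  have hs : ∀ u : ℝ, 0 < S u := fun u => Real.sqrt_pos.2 (by positivity)
  have hsq : ∀ u : ℝ, S u ^ 2 = u^2 + k := fun u => Real.sq_sqrt (by positivity)
  have habs : ∀ u : ℝ, |u| < S u := by
    intro u
    have h : Real.sqrt (u^2) < Real.sqrt (u^2+k) := by
      apply Real.sqrt_lt_sqrt (by positivity); linarith
    simpa [Real.sqrt_sq_eq_abs] using h
  set φ : ℝ → ℝ := fun u => (u + S u) / (2*c) with hφ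
  set φd : ℝ → ℝ := fun u => (1 + u / S u) / (2*c) with hφd
  have hφpos : ∀ u, 0 < φ u := by
    intro u
    have h1 := habs u
    have h2 : -|u| ≤ u := neg_abs_le u
    have : 0 < u + S u := by linarith
    positivity
  have hquad : ∀ u, c * φ u ^ 2 - u * φ u - d = 0 := by
    intro u
    have h2 := hsq u
    rw [hφ]
    simp only
    field_simp
    nlinarith [hsq u]
  have key : ∀ u, c * φ u - d / φ u = u := by
    intro u
    have h0 := (hφpos u).ne'
    have hq := hquad u
    field_simp
    nlinarith [hq]
  have hinj : Set.InjOn φ Set.univ := by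
    intro a _ b _ hab
    have := key a
    rw [hab, key b] at this
    exact this.symm
  have hrange : φ '' Set.univ = Set.Ioi (0:ℝ) := by
    rw [Set.image_univ]
    apply Set.eq_of_subset_of_subset
    · rintro - ⟨u, rfl⟩; exact hφpos u
    · rintro t ht
      have ht' : (0:ℝ) < t := ht
      refine ⟨c*t - d/t, ?_⟩
      have hSval : S (c*t - d/t) = c*t + d/t := by
        rw [hS]
        simp only
        rw [show (c*t - d/t)^2 + k = (c*t + d/t)^2 by
          field_simp; ring]
        exact Real.sqrt_sq (by positivity)
      rw [hφ]
      simp only [hSval]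
      field_simp
      ring
  have hderiv : ∀ u, HasDerivAt φ (φd u) u := by
    intro u
    have h1 : HasDerivAt (fun u : ℝ => u^2 + k) (2*u) u := by
      simpa using ((hasDerivAt_pow 2 u).add_const k)
    have h2 : HasDerivAt S (u / S u) u := by
      have := (Real.hasDerivAt_sqrt (by positivity : u^2 + k ≠ 0)).comp u h1
      refine this.congr_deriv ?_
      rw [hS]
      field_simp
    have h3 : HasDerivAt (fun u => u + S u) (1 + u / S u) u :=
      (hasDerivAt_id u).add h2
    exact h3.div_const (2*c)
  have hφdnn : ∀ u, 0 ≤ φd u := by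
    intro u
    have h1 := habs u
    have h2 : -|u| ≤ u := neg_abs_le u
    have h3 : -1 ≤ u / S u := by
      rw [le_div_iff₀ (hs u)]
      nlinarith [hs u]
    have : 0 ≤ 1 + u / S u := by linarith
    positivity
  -- change of variables
  have hcv := MeasureTheory.integral_image_eq_integral_abs_deriv_smul
      MeasurableSet.univ (fun u _ => (hderiv u).hasDerivWithinAt) hinj
      (fun t => Real.exp (-(c*t - d/t)^2))
  rw [hrange, Measure.restrict_univ] at hcv
  rw [hcv]
  have hcong : ∀ u : ℝ, |φd u| • Real.exp (-(c * φ u - d / φ u)^2)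
      = φd u * Real.exp (-u^2) := by
    intro u
    rw [key u, abs_of_nonneg (hφdnn u), smul_eq_mul]
  simp only [hcong]
  -- symmetrization
  set f : ℝ → ℝ := fun u => φd u * Real.exp (-u^2) with hf
  have hcont : Continuous f := by
    apply Continuous.mul
    · apply Continuous.div_const
      apply Continuous.add continuous_const
      apply Continuous.div continuous_id
      · exact (Real.continuous_sqrt.comp (by continuity))
      · intro u; exact (hs u).ne'
    · continuity
  have hfint : Integrable f := by
    apply Integrable.mono ((integrable_exp_neg_mul_sq one_pos).const_mul (1/c))
      hcont.aestronglyMeasurable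
    filter_upwards with u
    have h3 : u / S u ≤ 1 := by
      rw [div_le_one (hs u)]
      calc u ≤ |u| := le_abs_self u
        _ ≤ S u := (habs u).le
    have hb : f u ≤ 1/c * Real.exp (-u^2) := by
      rw [hf]
      simp only
      have : φd u ≤ 1/c := by
        rw [hφd]; simp only
        rw [div_le_div_iff₀ (by positivity) hc]
        nlinarith
      nlinarith [Real.exp_pos (-u^2), hφdnn u]
    rw [Real.norm_eq_abs, Real.norm_eq_abs, abs_of_nonneg (by
      exact mul_nonneg (hφdnn u) (Real.exp_pos _).le),
      abs_of_nonneg (by positivity)]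
    simpa using hb
  have hneg : ∫ u, f (-u) = ∫ u, f u := integral_neg_eq_self f volume
  have hsum : ∀ u, f u + f (-u) = 1/c * Real.exp (-u^2) := by
    intro u
    have hSneg : S (-u) = S u := by rw [hS]; simp
    rw [hf, hφd]
    simp only [hSneg, neg_sq]
    field_simp
    ring
  have h2int : (∫ u, f u) + (∫ u, f (-u)) = ∫ u, (1/c) * Real.exp (-u^2) := by
    rw [← integral_add hfint (hfint.comp_neg)]
    congr 1
    ext u
    exact hsum u
  have hgauss : ∫ u : ℝ, (1/c) * Real.exp (-u^2) = (1/c) * Real.sqrt π := by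
    rw [integral_const_mul]
    have := integral_gaussian 1
    simp only [one_mul, neg_mul] at this ⊢
    rw [this]
    norm_num
  rw [hneg, hgauss] at h2int
  have h3 : (∫ u, f u) = 1/c * Real.sqrt π / 2 := by linarith
  rw [h3]
  ring

lemma inner_integral (l x : ℝ) (hl : 0 < l) :
    ∫ γ in Set.Ioi (0:ℝ), (2 * π * γ) ^ (-(1/2) : ℝ) * Real.exp (-x ^ 2 / (2 * γ)) *
        (l ^ 2 / 2) * Real.exp (-(l ^ 2) * γ / 2)
      = l / 2 * Real.exp (-(l * |x|)) := by
  have hsπ : (2:ℝ) * π > 0 := by positivity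
  have h2π : ((2:ℝ) * π) ^ (-(1/2) : ℝ) = (Real.sqrt 2 * Real.sqrt π)⁻¹ := by
    rw [Real.rpow_neg hsπ.le, ← Real.sqrt_eq_rpow, Real.sqrt_mul (by norm_num) π]
  have hs2pos : (0:ℝ) < Real.sqrt 2 := by positivity
  have hsppos : (0:ℝ) < Real.sqrt π := Real.sqrt_pos.2 pi_pos
  rcases eq_or_ne x 0 with rfl | hx
  · -- x = 0 case, Gamma(1/2) integral
    have hcong : ∀ γ ∈ Set.Ioi (0:ℝ),
        (2 * π * γ) ^ (-(1/2) : ℝ) * Real.exp (-(0:ℝ) ^ 2 / (2 * γ)) *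
          (l ^ 2 / 2) * Real.exp (-(l ^ 2) * γ / 2)
        = ((2*π) ^ (-(1/2) : ℝ) * (l^2/2)) * (γ ^ ((1/2 : ℝ) - 1) * Real.exp (-(l^2/2 * γ))) := by
      intro γ hγ
      have hγ0 : (0:ℝ) < γ := hγ
      rw [Real.mul_rpow (by positivity) hγ0.le]
      have h1 : -(0:ℝ)^2/(2*γ) = 0 := by norm_num
      have h2 : -(l^2) * γ / 2 = -(l^2/2 * γ) := by ring
      have h3 : ((1/2:ℝ) - 1) = -(1/2:ℝ) := by norm_num
      rw [h1, h2, h3]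
      simp [Real.exp_zero]
      ring
    rw [setIntegral_congr_fun measurableSet_Ioi hcong, integral_const_mul,
      integral_rpow_mul_exp_neg_mul_Ioi one_half_pos (by positivity : (0:ℝ) < l^2/2)]
    rw [Real.Gamma_one_half_eq]
    have h4 : ((1:ℝ)/(l^2/2)) ^ ((1:ℝ)/2) = Real.sqrt 2 / l := by
      rw [← Real.sqrt_eq_rpow, show (1:ℝ)/(l^2/2) = 2/l^2 by ring,
        Real.sqrt_div (by norm_num) (l^2), Real.sqrt_sq hl.le]
    rw [h4, h2π]
    simp only [abs_zero, mul_zero, neg_zero, Real.exp_zero, mul_one]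
    field_simp
  · -- x ≠ 0 : substitution γ = t^2 then Glasser
    have hx' : 0 < |x| := abs_pos.2 hx
    set c := l / Real.sqrt 2 with hcdef
    set d := |x| / Real.sqrt 2 with hddef
    have hs2 : Real.sqrt 2 ^ 2 = 2 := Real.sq_sqrt (by norm_num)
    have hc : 0 < c := by positivity
    have hd : 0 < d := by positivity
    have hinj : Set.InjOn (fun t : ℝ => t^2) (Set.Ioi 0) := by
      intro a ha b hb hab
      have := congrArg Real.sqrt hab
      rwa [Real.sqrt_sq (le_of_lt ha), Real.sqrt_sq (le_of_lt hb)] at this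
    have himg : (fun t : ℝ => t^2) '' (Set.Ioi 0) = Set.Ioi 0 := by
      apply Set.eq_of_subset_of_subset
      · rintro - ⟨t, ht, rfl⟩
        exact pow_pos (Set.mem_Ioi.mp ht) 2
      · rintro y hy
        exact ⟨Real.sqrt y, Real.sqrt_pos.2 hy, Real.sq_sqrt (le_of_lt hy)⟩
    have hcv := MeasureTheory.integral_image_eq_integral_abs_deriv_smul
        measurableSet_Ioi
        (fun t _ => (by simpa using (hasDerivAt_pow 2 t) :
            HasDerivAt (fun t : ℝ => t^2) (2*t) t).hasDerivWithinAt)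
        hinj
        (fun γ => (2 * π * γ) ^ (-(1/2) : ℝ) * Real.exp (-x ^ 2 / (2 * γ)) *
          (l ^ 2 / 2) * Real.exp (-(l ^ 2) * γ / 2))
    rw [himg] at hcv
    rw [hcv]
    have hcong : ∀ t ∈ Set.Ioi (0:ℝ),
        |2*t| • ((2 * π * t^2) ^ (-(1/2) : ℝ) * Real.exp (-x ^ 2 / (2 * t^2)) *
          (l ^ 2 / 2) * Real.exp (-(l ^ 2) * t^2 / 2))
        = ((2*π) ^ (-(1/2) : ℝ) * l^2 * Real.exp (-(l*|x|))) * Real.exp (-(c*t - d/t)^2) := by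
      intro t ht
      have ht0 : (0:ℝ) < t := ht
      have habs : |2*t| = 2*t := abs_of_pos (by linarith)
      have hpow : ((t:ℝ)^2) ^ (-(1/2) : ℝ) = t⁻¹ := by
        rw [← Real.rpow_natCast t 2, ← Real.rpow_mul ht0.le]
        norm_num
        exact Real.rpow_neg_one t
      have hexp : Real.exp (-x ^ 2 / (2 * t^2)) * Real.exp (-(l ^ 2) * t^2 / 2)
          = Real.exp (-(l*|x|)) * Real.exp (-(c*t - d/t)^2) := by
        rw [← Real.exp_add, ← Real.exp_add]
        congr 1
        have expand : (c*t - d/t)^2 = c^2*t^2 - 2*(c*d) + d^2/t^2 := by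
          field_simp
          ring
        have hc2 : c^2 = l^2/2 := by rw [hcdef, div_pow, hs2]
        have hd2 : d^2 = x^2/2 := by rw [hddef, div_pow, hs2, sq_abs]
        have hcd : c*d = l*|x|/2 := by
          rw [hcdef, hddef, div_mul_div_comm,
            Real.mul_self_sqrt (by norm_num : (0:ℝ) ≤ 2)]
        rw [expand, hc2, hd2, hcd]
        field_simp
        ring
      rw [smul_eq_mul, habs, Real.mul_rpow (by positivity) (by positivity), hpow]
      rw [show 2*t*((2*π) ^ (-(1/2):ℝ) * t⁻¹ * Real.exp (-x^2/(2*t^2)) * (l^2/2) *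
            Real.exp (-(l^2)*t^2/2))
          = (2*π) ^ (-(1/2):ℝ) * (t*t⁻¹) * l^2 *
            (Real.exp (-x^2/(2*t^2)) * Real.exp (-(l^2)*t^2/2)) from by ring,
        hexp, mul_inv_cancel₀ ht0.ne']
      ring
    rw [setIntegral_congr_fun measurableSet_Ioi hcong, integral_const_mul,
      glasser c d hc hd]
    rw [h2π, hcdef]
    field_simp

/-- The three-layer Gaussian–Exponential–Gamma hierarchy marginalizes to the
generalized double Pareto density GT(1,1,ε). -/
theorem gaussian_exponential_gamma_hierarchy_eq_GDP (ε : ℝ) (hε : 0 < ε) (x : ℝ) :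
    ∫ l in Set.Ioi (0 : ℝ), ∫ γ in Set.Ioi (0 : ℝ),
      (2 * π * γ) ^ (-(1/2) : ℝ) * Real.exp (-x ^ 2 / (2 * γ)) *
        (l ^ 2 / 2) * Real.exp (-(l ^ 2) * γ / 2) *
        ((ε ^ ε / Real.Gamma ε) * l ^ (ε - 1) * Real.exp (-ε * l))
      = (1 / 2) * (1 + |x| / ε) ^ (-(ε + 1)) := by
  have hΓ : 0 < Real.Gamma ε := Real.Gamma_pos_of_pos hε
  have hxε : (0:ℝ) < |x| + ε := by positivity
  have hstep1 : ∀ l ∈ Set.Ioi (0:ℝ),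
      (∫ γ in Set.Ioi (0:ℝ),
        (2 * π * γ) ^ (-(1/2) : ℝ) * Real.exp (-x ^ 2 / (2 * γ)) *
          (l ^ 2 / 2) * Real.exp (-(l ^ 2) * γ / 2) *
          ((ε ^ ε / Real.Gamma ε) * l ^ (ε - 1) * Real.exp (-ε * l)))
      = (ε ^ ε / Real.Gamma ε / 2) * (l ^ ((ε + 1) - 1) * Real.exp (-((|x| + ε) * l))) := by
    intro l hl
    have hl0 : (0:ℝ) < l := hl
    rw [integral_mul_const, inner_integral l x hl0]
    have h1 : l ^ ((ε + 1) - 1) = l * l ^ (ε - 1) := by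
      rw [show (ε + 1) - 1 = 1 + (ε - 1) by ring, Real.rpow_add hl0, Real.rpow_one]
    have h2 : Real.exp (-((|x| + ε) * l)) = Real.exp (-(l * |x|)) * Real.exp (-ε * l) := by
      rw [← Real.exp_add]
      ring_nf
    rw [h1, h2]
    ring
  rw [setIntegral_congr_fun measurableSet_Ioi hstep1, integral_const_mul,
    integral_rpow_mul_exp_neg_mul_Ioi (by positivity) hxε,
    Real.Gamma_add_one hε.ne']
  have h3 : ((1:ℝ)/(|x| + ε)) ^ (ε + 1) = ((|x| + ε) ^ (ε + 1))⁻¹ := by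
    rw [one_div, Real.inv_rpow hxε.le]
  have h4 : (1 + |x| / ε) ^ (-(ε + 1)) = ε ^ (ε + 1) / (|x| + ε) ^ (ε + 1) := by
    rw [show 1 + |x| / ε = (|x| + ε) / ε by field_simp; ring,
      Real.rpow_neg (by positivity), Real.div_rpow hxε.le hε.le]
    rw [inv_div]
  have h5 : ε ^ (ε + 1) = ε ^ ε * ε := by
    rw [Real.rpow_add hε, Real.rpow_one]
  rw [h3, h4, h5]
  have h6 : ((|x| + ε) ^ (ε + 1) : ℝ) ≠ 0 := by positivity
  field_simp
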